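/- Let Γ be a finite abelian group. Then there exist a natural number k and positive integers d_1, …, d_k such that the rational group algebra ℚ[Γ] is isomorphic, as a ℚ-algebra, to the direct product of cyclotomic fields ℚ(ζ_{d_1}) × ⋯ × ℚ(ζ_{d_k}), where ζ_d denotes a primitive d-th root of unity. -/

import Mathlib

open Polynomial

noncomputable def ratAlgEquivOfRingEquiv {A B : Type*} [Semiring A] [Semiring B]
    [Algebra ℚ A] [Algebra ℚ B] (e : A ≃+* B) : A ≃ₐ[ℚ] B :=
  AlgEquiv.ofRingEquiv (f := e) fun q => RingHom.congr_fun
    (Subsingleton.elim ((e : A →+* B).comp (algebraMap ℚ A)) (algebraMap ℚ B)) q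

theorem isReduced_of_isSemisimpleRing' (R : Type*) [CommRing R] [IsSemisimpleRing R] :
    IsReduced R := by
  constructor
  rintro x ⟨n, hn⟩
  obtain ⟨e, he, hspan⟩ := IsSemisimpleRing.ideal_eq_span_idempotent (Ideal.span {x})
  have hx : x ∈ Ideal.span {e} := hspan ▸ Ideal.mem_span_singleton_self x
  have hes : e ∈ Ideal.span {x} := hspan ▸ Ideal.mem_span_singleton_self e
  obtain ⟨a, ha⟩ := Ideal.mem_span_singleton'.mp hes
  cases n with
  | zero =>
      haveI : Subsingleton R := subsingleton_iff_zero_eq_one.mp (by simpa using hn.symm)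
      exact Subsingleton.elim x 0
  | succ m =>
      have he0 : e = 0 := by
        have : e ^ (m + 1) = e := he.pow_succ_eq m
        calc e = e ^ (m + 1) := this.symm
          _ = (a * x) ^ (m + 1) := by rw [ha]
          _ = a ^ (m + 1) * x ^ (m + 1) := mul_pow a x (m + 1)
          _ = 0 := by rw [hn, mul_zero]
      rw [he0, Ideal.span_singleton_eq_bot.mpr rfl, Ideal.mem_bot] at hx
      exact hx


theorem quot_iso_cyclo (G : Type) [CommGroup G] [Finite G]
    (I : Ideal (MonoidAlgebra ℚ G)) (hI : I.IsMaximal) :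
    ∃ d : ℕ+, Nonempty ((MonoidAlgebra ℚ G ⧸ I) ≃ₐ[ℚ] CyclotomicField d ℚ) := by
  haveI := hI
  letI : Field (MonoidAlgebra ℚ G ⧸ I) := Ideal.Quotient.field I
  let π : MonoidAlgebra ℚ G →ₐ[ℚ] MonoidAlgebra ℚ G ⧸ I := Ideal.Quotient.mkₐ ℚ I
  let φ : G →* MonoidAlgebra ℚ G ⧸ I :=
    (π : MonoidAlgebra ℚ G →* MonoidAlgebra ℚ G ⧸ I).comp (MonoidAlgebra.of ℚ G)
  let ψ : G →* (MonoidAlgebra ℚ G ⧸ I)ˣ := φ.toHomUnits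
  haveI : Finite ψ.range := Set.finite_range ψ |>.to_subtype
  obtain ⟨g, hg⟩ := IsCyclic.exists_generator (α := ψ.range)
  set ζ : MonoidAlgebra ℚ G ⧸ I := ((g : (MonoidAlgebra ℚ G ⧸ I)ˣ) : MonoidAlgebra ℚ G ⧸ I)
    with hζdef
  set d : ℕ := orderOf ζ with hddef
  have hζ : IsPrimitiveRoot ζ d := IsPrimitiveRoot.orderOf ζ
  have hd : 0 < d := by
    have h1 : orderOf ζ = orderOf (g : (MonoidAlgebra ℚ G ⧸ I)ˣ) := orderOf_units
    have h2 : orderOf (g : (MonoidAlgebra ℚ G ⧸ I)ˣ) = orderOf g :=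
      orderOf_injective ψ.range.subtype Subtype.coe_injective g
    rw [hddef, h1, h2]
    exact orderOf_pos g
  have key : ∀ γ : G, φ γ ∈ Algebra.adjoin ℚ {ζ} := by
    intro γ
    obtain ⟨n, hn⟩ : ∃ n : ℕ, g ^ n = (⟨ψ γ, ⟨γ, rfl⟩⟩ : ψ.range) :=
      (Submonoid.mem_powers_iff _ _).mp <|
        (isOfFinOrder_of_finite g).mem_powers_iff_mem_zpowers.mpr (hg ⟨ψ γ, ⟨γ, rfl⟩⟩)
    have hφγ : φ γ = ζ ^ n := by
      have : ((g : ψ.range) ^ n : ψ.range) = (⟨ψ γ, ⟨γ, rfl⟩⟩ : ψ.range) := hn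
      have h2 := congrArg (fun x : ψ.range => ((x : (MonoidAlgebra ℚ G ⧸ I)ˣ) :
        MonoidAlgebra ℚ G ⧸ I)) this
      simp only [SubmonoidClass.coe_pow, Units.val_pow_eq_pow_val] at h2
      rw [hζdef, h2]
      exact (φ.coe_toHomUnits γ).symm
    rw [hφγ]
    exact pow_mem (Algebra.self_mem_adjoin_singleton ℚ ζ) n
  have hadj : Algebra.adjoin ℚ {ζ} = ⊤ := by
    rw [eq_top_iff]
    rintro x -
    obtain ⟨y, rfl⟩ := Ideal.Quotient.mkₐ_surjective ℚ I x
    have hy := MonoidAlgebra.mem_span_support_coeff (k := ℚ) y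
    have hmap : π y ∈ Submodule.map π.toLinearMap
        (Submodule.span ℚ (⇑(MonoidAlgebra.of ℚ G) '' ↑y.coeff.support)) :=
      Submodule.mem_map_of_mem hy
    rw [Submodule.map_span] at hmap
    rw [← Subalgebra.mem_toSubmodule]
    refine Submodule.span_le.mpr ?_ hmap
    rintro _ ⟨_, ⟨γ, -, rfl⟩, rfl⟩
    exact key γ
  refine ⟨⟨d, hd⟩, ?_⟩
  haveI hcyc : IsCyclotomicExtension {d} ℚ (MonoidAlgebra ℚ G ⧸ I) := by
    rw [IsCyclotomicExtension.iff_adjoin_eq_top]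
    constructor
    · rintro n hn -
      rw [Set.mem_singleton_iff] at hn
      subst hn
      exact ⟨ζ, hζ⟩
    · rw [eq_top_iff, ← hadj]
      apply Algebra.adjoin_mono
      rw [Set.singleton_subset_iff]
      exact ⟨d, rfl, hd.ne', hζ.pow_eq_one⟩
  haveI : NeZero d := ⟨hd.ne'⟩
  haveI : NeZero (d : ℚ) := ⟨by exact_mod_cast hd.ne'⟩
  letI : Algebra ℚ (CyclotomicField d ℚ) := CyclotomicField.algebra d ℚ
  haveI := CyclotomicField.isCyclotomicExtension d ℚ
  exact ⟨IsCyclotomicExtension.algEquiv (S := {d}) (K := ℚ) (L := MonoidAlgebra ℚ G ⧸ I) (CyclotomicField d ℚ)⟩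

theorem test_main (G : Type) [CommGroup G] [Finite G]
    (quot_iso : ∀ (I : Ideal (MonoidAlgebra ℚ G)), I.IsMaximal →
      ∃ d : ℕ+, Nonempty ((MonoidAlgebra ℚ G ⧸ I) ≃ₐ[ℚ] CyclotomicField d ℚ))
    (hred : IsReduced (MonoidAlgebra ℚ G)) :
    ∃ (k : ℕ) (d : Fin k → ℕ+),
      Nonempty (MonoidAlgebra ℚ G ≃+* ∀ i : Fin k, CyclotomicField (d i) ℚ) := by
  haveI : Fintype G := Fintype.ofFinite G
  haveI : IsArtinianRing (MonoidAlgebra ℚ G) := by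
    have h1 : IsArtinian ℚ (MonoidAlgebra ℚ G) := isArtinian_of_linearEquiv (MonoidAlgebra.coeffLinearEquiv ℚ).symm
    exact isArtinian_of_tower ℚ h1
  haveI := hred
  haveI := (IsArtinianRing.setOfPred_isMaximal_finite (MonoidAlgebra ℚ G)).to_subtype
  haveI : Fintype {I : Ideal (MonoidAlgebra ℚ G) | I.IsMaximal} := Fintype.ofFinite _
  set M := {I : Ideal (MonoidAlgebra ℚ G) | I.IsMaximal} with hM
  let eidx : M ≃ Fin (Fintype.card M) := Fintype.equivFin M
  choose D hD using fun I : M => quot_iso I.1 I.2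
  refine ⟨Fintype.card M, fun i => D (eidx.symm i), ?_⟩
  have E1 := IsArtinianRing.equivPi (MonoidAlgebra ℚ G)
  have E2 : (∀ I : M, MonoidAlgebra ℚ G ⧸ I.1) ≃+* ∀ I : M, CyclotomicField (D I) ℚ :=
    RingEquiv.piCongrRight fun I => (hD I).some.toRingEquiv
  have E3 : (∀ I : M, CyclotomicField (D I) ℚ) ≃+*
      ∀ i : Fin (Fintype.card M), CyclotomicField (D (eidx.symm i)) ℚ :=
    (RingEquiv.piCongrLeft (fun I : M => CyclotomicField (D I) ℚ) eidx.symm).symm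
  let e0 : MaximalSpectrum (MonoidAlgebra ℚ G) ≃ M :=
    ⟨fun P => ⟨P.asIdeal, P.isMaximal⟩, fun I => ⟨I.1, I.2⟩, fun _ => rfl, fun _ => rfl⟩
  exact ⟨(E1.toRingEquiv.trans (RingEquiv.piCongrLeft (fun I : M => MonoidAlgebra ℚ G ⧸ I.1) e0)).trans (E2.trans E3)⟩

/-- The rational group algebra of a finite abelian group is isomorphic, as a
`ℚ`-algebra, to a finite direct product of cyclotomic fields. -/
theorem rat_groupAlgebra_of_finite_abelian_iso_pi_cyclotomic
    (Γ : Type*) [CommGroup Γ] [Finite Γ] :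
    ∃ (k : ℕ) (d : Fin k → ℕ+),
      Nonempty (MonoidAlgebra ℚ Γ ≃ₐ[ℚ] ∀ i : Fin k, CyclotomicField (d i) ℚ) := by
  classical
  obtain ⟨ι, hι, n, hn, ⟨e⟩⟩ := CommGroup.equiv_prod_multiplicative_zmod_of_finite Γ
  haveI := hι
  haveI : ∀ i, NeZero (n i) := fun i => ⟨by have := hn i; omega⟩
  haveI : Fintype (∀ i, Multiplicative (ZMod (n i))) := inferInstance
  haveI : NeZero (Fintype.card (∀ i, Multiplicative (ZMod (n i))) : ℚ) :=
    ⟨Nat.cast_ne_zero.mpr Fintype.card_ne_zero⟩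
  haveI hss : IsSemisimpleRing (MonoidAlgebra ℚ (∀ i, Multiplicative (ZMod (n i)))) :=
    inferInstance
  haveI hred : IsReduced (MonoidAlgebra ℚ (∀ i, Multiplicative (ZMod (n i)))) :=
    isReduced_of_isSemisimpleRing' _
  obtain ⟨k, d, ⟨E⟩⟩ := test_main (∀ i, Multiplicative (ZMod (n i)))
    (fun I hI => quot_iso_cyclo _ I hI) hred
  exact ⟨k, d, ⟨ratAlgEquivOfRingEquiv
    (((MonoidAlgebra.domCongr ℚ ℚ e).toRingEquiv).trans E)⟩⟩
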